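/- Momentum conservation by the splitting maps: let n ∈ ℕ, let M be a constant symmetric positive definite n×n real matrix, V : ℝⁿ → ℝ be C¹, D : ℝⁿ → Matrix (Fin n) (Fin n) ℝ with D(q) symmetric for every q, and ε ≥ 0. Let A be an n×n real matrix with M A skew-symmetric (i.e. (M A)ᵀ = −M A), let b ∈ ℝⁿ, and set a(q) = A q + b and J(q,p) = ⟨p, a(q)⟩. Assume ⟨∇V(q), a(q)⟩ = 0 and D(q) a(q) = 0 for all q. Then for every τ ∈ ℝ, each of the following maps of ℝⁿ × ℝⁿ leaves J invariant: (i) the drift map (q,p) ↦ (q + τ • M⁻¹p, p); (ii) the kick map (q,p) ↦ (q, p − τ • ∇V(q)); (iii) the dissipative map (q,p) ↦ (q, exp(−τ ε D(q) M⁻¹) p), where exp is the matrix exponential. Consequently any composition of such maps (in particular the splitting integrators built from them) exactly conserves the momentum J. -/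

import Mathlib

open scoped RealInnerProductSpace
open Matrix

/-- Action of an `n × n` real matrix on a vector in `EuclideanSpace ℝ (Fin n)`. -/
noncomputable def mApp {n : ℕ} (A : Matrix (Fin n) (Fin n) ℝ)
    (v : EuclideanSpace ℝ (Fin n)) : EuclideanSpace ℝ (Fin n) :=
  Matrix.toEuclideanLin A v


lemma mApp_eq {n : ℕ} (A : Matrix (Fin n) (Fin n) ℝ) (v : EuclideanSpace ℝ (Fin n)) :
    mApp A v = (WithLp.equiv 2 (Fin n → ℝ)).symm (A *ᵥ (WithLp.equiv 2 (Fin n → ℝ)) v) := by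
  simp [mApp, Matrix.toEuclideanLin_apply]

lemma inner_ed {n : ℕ} (x y : EuclideanSpace ℝ (Fin n)) :
    ⟪x, y⟫ = (WithLp.equiv 2 (Fin n → ℝ) x) ⬝ᵥ (WithLp.equiv 2 (Fin n → ℝ) y) := by
  simp [PiLp.inner_apply, RCLike.inner_apply, dotProduct, WithLp.equiv]
  exact Finset.sum_congr rfl (fun i _ => mul_comm _ _)

lemma exp_mulVec_of_mulVec_eq_zero {n : ℕ} (X : Matrix (Fin n) (Fin n) ℝ)
    (a : Fin n → ℝ) (h : X *ᵥ a = 0) :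
    (NormedSpace.exp X) *ᵥ a = a := by
  letI : SeminormedRing (Matrix (Fin n) (Fin n) ℝ) := Matrix.linftyOpSemiNormedRing
  letI : NormedRing (Matrix (Fin n) (Fin n) ℝ) := Matrix.linftyOpNormedRing
  letI : NormedAlgebra ℝ (Matrix (Fin n) (Fin n) ℝ) := Matrix.linftyOpNormedAlgebra
  let L : Matrix (Fin n) (Fin n) ℝ →ₗ[ℝ] (Fin n → ℝ) :=
    { toFun := fun B => B *ᵥ a
      map_add' := fun B C => Matrix.add_mulVec B C a
      map_smul' := fun c B => (Matrix.smul_mulVec c B a) }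
  have hL : Continuous L := L.continuous_of_finiteDimensional
  have hs : Summable fun k : ℕ => ((k.factorial : ℝ)⁻¹) • X ^ k :=
    NormedSpace.expSeries_summable' (𝕂 := ℝ) X
  have : (NormedSpace.exp X) *ᵥ a
      = ∑' k : ℕ, L (((k.factorial : ℝ)⁻¹) • X ^ k) := by
    rw [NormedSpace.exp_eq_tsum (𝕂 := ℝ)]
    exact ((L.toContinuousLinearMap).map_tsum hs)
  rw [this, tsum_eq_single 0]
  · simp [L, Matrix.one_mulVec]
  · intro k hk
    obtain ⟨m, rfl⟩ := Nat.exists_eq_succ_of_ne_zero hk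
    simp only [L, LinearMap.coe_mk, AddHom.coe_mk, Matrix.smul_mulVec, pow_succ]
    rw [← Matrix.mulVec_mulVec, h, Matrix.mulVec_zero, smul_zero]

/-- Momentum conservation by the splitting maps: for the affine infinitesimal symmetry
`a(q) = A q + b` with `M A` skew-symmetric, `⟪∇V(q), a(q)⟫ = 0` and `D(q) a(q) = 0`, the
momentum `J(q,p) = ⟪p, A q + b⟫` is exactly conserved by the drift map
`(q,p) ↦ (q + τ M⁻¹ p, p)`, the kick map `(q,p) ↦ (q, p - τ ∇V(q))`, and the dissipative
map `(q,p) ↦ (q, exp(-τ ε D(q) M⁻¹) p)`; hence by any composition of such maps. -/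
theorem splitting_maps_conserve_momentum (n : ℕ)
    (M : Matrix (Fin n) (Fin n) ℝ) (hM : M.PosDef)
    (V : EuclideanSpace ℝ (Fin n) → ℝ) (hV : ContDiff ℝ 1 V)
    (D : EuclideanSpace ℝ (Fin n) → Matrix (Fin n) (Fin n) ℝ)
    (hDsym : ∀ q, (D q).IsSymm)
    (ε : ℝ) (hε : 0 ≤ ε)
    (A : Matrix (Fin n) (Fin n) ℝ) (hA : (M * A)ᵀ = -(M * A))
    (b : EuclideanSpace ℝ (Fin n))
    (hVa : ∀ q : EuclideanSpace ℝ (Fin n), ⟪gradient V q, mApp A q + b⟫ = 0)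
    (hDa : ∀ q : EuclideanSpace ℝ (Fin n), mApp (D q) (mApp A q + b) = 0) :
    ∀ τ : ℝ, ∀ q p : EuclideanSpace ℝ (Fin n),
      (⟪p, mApp A (q + τ • mApp M⁻¹ p) + b⟫ = ⟪p, mApp A q + b⟫) ∧
      (⟪p - τ • gradient V q, mApp A q + b⟫ = ⟪p, mApp A q + b⟫) ∧
      (⟪mApp (NormedSpace.exp ((-(τ * ε)) • (D q * M⁻¹))) p, mApp A q + b⟫
        = ⟪p, mApp A q + b⟫) := by
  have hMsymm : Mᵀ = M := hM.isHermitian.eq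
  have hMinv : Invertible M := hM.isUnit.invertible
  intro τ q p
  refine ⟨?_, ?_, ?_⟩
  · -- drift
    have key : ⟪(p : EuclideanSpace ℝ (Fin n)), mApp A (mApp M⁻¹ p)⟫ = 0 := by
      rw [inner_ed, mApp_eq, mApp_eq]
      set x : Fin n → ℝ := M⁻¹ *ᵥ (WithLp.equiv 2 (Fin n → ℝ) p) with hx
      have hp : (WithLp.equiv 2 (Fin n → ℝ) p) = M *ᵥ x := by
        rw [hx, Matrix.mulVec_mulVec, Matrix.mul_nonsing_inv _ ((Matrix.isUnit_iff_isUnit_det M).mp hM.isUnit),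
          Matrix.one_mulVec]
      simp only [Equiv.apply_symm_apply]
      rw [hp]
      have hvm : M *ᵥ x = Matrix.vecMul x M := by
        rw [← Matrix.mulVec_transpose, hMsymm]
      rw [hvm, ← Matrix.dotProduct_mulVec, Matrix.mulVec_mulVec]
      have h0 : x ⬝ᵥ (M * A) *ᵥ x = -(x ⬝ᵥ (M * A) *ᵥ x) := by
        conv_lhs => rw [Matrix.dotProduct_mulVec, ← Matrix.mulVec_transpose, hA,
          Matrix.neg_mulVec, neg_dotProduct, dotProduct_comm]
      linarith
    have hlin : mApp A (q + τ • mApp M⁻¹ p) = mApp A q + τ • mApp A (mApp M⁻¹ p) := by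
      simp [mApp, map_add, _root_.map_smul]
    rw [hlin, add_right_comm, inner_add_right, real_inner_smul_right, key, mul_zero, add_zero]
  · rw [inner_sub_left, real_inner_smul_left, hVa, mul_zero, sub_zero]
  · -- dissipative
    set a : EuclideanSpace ℝ (Fin n) := mApp A q + b with ha
    rw [inner_ed, inner_ed, mApp_eq]
    have h1 : (M⁻¹ * D q) *ᵥ (WithLp.equiv 2 (Fin n → ℝ) a) = 0 := by
      have := hDa q
      rw [mApp_eq] at this
      have h2 : (D q) *ᵥ (WithLp.equiv 2 (Fin n → ℝ) a) = 0 := by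
        have := congrArg (WithLp.equiv 2 (Fin n → ℝ)) this
        simpa [ha] using this
      rw [← Matrix.mulVec_mulVec, h2, Matrix.mulVec_zero]
    simp only [Equiv.apply_symm_apply]
    set c : ℝ := -(τ * ε) with hc
    set ea : Fin n → ℝ := WithLp.equiv 2 (Fin n → ℝ) a with hea
    set ep : Fin n → ℝ := WithLp.equiv 2 (Fin n → ℝ) p with hep
    have hET : (NormedSpace.exp (c • (D q * M⁻¹)))ᵀ
        = NormedSpace.exp (c • (M⁻¹ * D q)) := by
      rw [← Matrix.exp_transpose]
      congr 1
      rw [Matrix.transpose_smul, Matrix.transpose_mul, Matrix.transpose_nonsing_inv, hMsymm,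
        (hDsym q).eq]
    have hx : (c • (M⁻¹ * D q)) *ᵥ ea = 0 := by
      rw [Matrix.smul_mulVec, h1, smul_zero]
    calc (NormedSpace.exp (c • (D q * M⁻¹)) *ᵥ ep) ⬝ᵥ ea
        = ep ⬝ᵥ ((NormedSpace.exp (c • (D q * M⁻¹)))ᵀ *ᵥ ea) := by
          rw [dotProduct_comm, Matrix.dotProduct_mulVec, ← Matrix.mulVec_transpose,
            dotProduct_comm]
      _ = ep ⬝ᵥ ea := by rw [hET, exp_mulVec_of_mulVec_eq_zero _ _ hx]
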